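/- Let R̂ be the 4×4 complex matrix with rows (1,0,0,1), (0,1,−1,0), (0,1,1,0), (−1,0,0,1), so that R̂⁻¹ = I − ½R̂ (since R̂² − 2R̂ + 2I = 0). For real z > 0 define R̂(z) = (z² + z⁻²)^{−1/2}·((√2·z)⁻¹·R̂ + √2·z·R̂⁻¹). Then for every real z > 0 one has R̂(z⁻¹)·R̂(z) = I. -/

import Mathlib

/-- The braid matrix of the exotic case `S03`. -/
noncomputable def S03 : Matrix (Fin 4) (Fin 4) ℂ :=
  !![1, 0, 0, 1; 0, 1, -1, 0; 0, 1, 1, 0; -1, 0, 0, 1]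

/-- The explicitly real Baxterized form
`R̂(z) = (z² + z⁻²)^{-1/2} ((√2 z)⁻¹ R̂ + √2 z R̂⁻¹)` for real `z > 0`. -/
noncomputable def S03z (z : ℝ) : Matrix (Fin 4) (Fin 4) ℂ :=
  ((Real.sqrt (z ^ 2 + (z⁻¹) ^ 2) : ℂ))⁻¹ •
    (((Real.sqrt 2 * z : ℝ) : ℂ)⁻¹ • S03 + ((Real.sqrt 2 * z : ℝ) : ℂ) • S03⁻¹)

lemma S03_sq : S03 * S03 = (2:ℂ) • S03 - (2:ℂ) • 1 := by
  ext i j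
  rw [Matrix.mul_apply, Fin.sum_univ_four]
  fin_cases i <;> fin_cases j <;> simp [S03, Matrix.one_apply] <;> ring

lemma S03_inv : S03⁻¹ = (1 : Matrix (Fin 4) (Fin 4) ℂ) - (2:ℂ)⁻¹ • S03 := by
  have h : S03 * ((1 : Matrix (Fin 4) (Fin 4) ℂ) - (2:ℂ)⁻¹ • S03) = 1 := by
    rw [Matrix.mul_sub, Matrix.mul_one, Matrix.mul_smul, S03_sq]
    rw [smul_sub, smul_smul, smul_smul]
    norm_num
  rw [Matrix.inv_eq_right_inv h]

set_option maxHeartbeats 1000000 in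
lemma s03_key {A : Type*} [Ring A] [Algebra ℂ A] (R : A)
    (hR2 : R * R = (2:ℂ) • R - (2:ℂ) • 1)
    (s w z : ℂ) (hz : z ≠ 0) (hs : s ^ 2 = z ^ 2 + (z⁻¹) ^ 2) (hsn : s ≠ 0)
    (h2 : w ^ 2 = 2) (h2n : w ≠ 0) :
    (s⁻¹ • ((w * z⁻¹)⁻¹ • R + (w * z⁻¹) • ((1 : A) - (2:ℂ)⁻¹ • R))) *
    (s⁻¹ • ((w * z)⁻¹ • R + (w * z) • ((1 : A) - (2:ℂ)⁻¹ • R))) = 1 := by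
  have e1 : (w * z⁻¹)⁻¹ = w * z / 2 := by
    field_simp
    linear_combination (-1 : ℂ) * h2
  have e2 : (w * z)⁻¹ = w * z⁻¹ / 2 := by
    field_simp
    linear_combination (-1 : ℂ) * h2
  rw [e1, e2]
  simp only [add_mul, mul_add, smul_mul_assoc, mul_smul_comm, sub_mul, mul_sub,
    mul_one, one_mul, smul_sub, smul_add, smul_smul, hR2]
  match_scalars
  · ring
  · have hzz : z * z⁻¹ = 1 := mul_inv_cancel₀ hz
    have hss : s * s⁻¹ = 1 := mul_inv_cancel₀ hsn
    linear_combination (s⁻¹^2*(z^2+z⁻¹^2)/2)*h2 - s⁻¹^2*hs + (s*s⁻¹+1)*hss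

/-- unitarity `R̂(z⁻¹) R̂(z) = I` of the Baxterized `S03` braid matrix. -/
theorem s03_baxterized_unitarity (z : ℝ) (hz : 0 < z) :
    S03z z⁻¹ * S03z z = 1 := by
  have hz' : (z:ℂ) ≠ 0 := by exact_mod_cast hz.ne'
  have h2 : ((Real.sqrt 2 : ℝ):ℂ) ^ 2 = 2 := by
    rw [← Complex.ofReal_pow, Real.sq_sqrt (by norm_num)]; norm_num
  have h2n : ((Real.sqrt 2 : ℝ):ℂ) ≠ 0 := by
    intro h; rw [h] at h2; simp at h2
  have hsum : (0:ℝ) < z ^ 2 + (z⁻¹) ^ 2 := by positivity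
  have hs : ((Real.sqrt (z ^ 2 + (z⁻¹) ^ 2) : ℝ):ℂ) ^ 2 = (z:ℂ) ^ 2 + ((z:ℂ)⁻¹) ^ 2 := by
    rw [← Complex.ofReal_pow, Real.sq_sqrt hsum.le]; push_cast; ring
  have hsn : ((Real.sqrt (z ^ 2 + (z⁻¹) ^ 2) : ℝ):ℂ) ≠ 0 := by
    simpa using (Real.sqrt_pos.mpr hsum).ne'
  have harg : ((z:ℝ)⁻¹) ^ 2 + ((z⁻¹)⁻¹) ^ 2 = z ^ 2 + (z⁻¹) ^ 2 := by
    rw [inv_inv]; ring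
  rw [S03z, S03z, harg, S03_inv]
  have c1 : ((Real.sqrt 2 * z⁻¹ : ℝ) : ℂ) = ((Real.sqrt 2 : ℝ):ℂ) * ((z:ℂ))⁻¹ := by
    push_cast; ring
  have c2 : ((Real.sqrt 2 * z : ℝ) : ℂ) = ((Real.sqrt 2 : ℝ):ℂ) * (z:ℂ) := by
    push_cast; ring
  rw [c1, c2]
  exact s03_key S03 S03_sq _ _ _ hz' hs hsn h2 h2n
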